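/- Let q, h, a : ℝ → E³ together with a continuously differentiable conical curvature κ : ℝ → ℝ be a Frenet frame of a ruled surface, with κ(s) ≠ 0 for all s, and let W(s) = κ(s)·q(s) + a(s) be the Darboux vector. If there is a fixed vector u ∈ E³ with u ≠ 0 such that s ↦ ⟪W(s), u⟫ is constant (i.e., the surface is Darboux slant), then κ is a constant function. -/

import Mathlib

open RealInnerProductSpace Matrix

noncomputable section

abbrev E3 := EuclideanSpace ℝ (Fin 3)

/-- A Frenet frame of a ruled surface: `q`, `h`, `a` are orthonormal at every
parameter and satisfy the Frenet equations with conical curvature `κ`. -/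
def IsFrenetFrame (q h a : ℝ → E3) (κ : ℝ → ℝ) : Prop :=
  (∀ s, ⟪q s, q s⟫ = 1 ∧ ⟪h s, h s⟫ = 1 ∧ ⟪a s, a s⟫ = 1 ∧
        ⟪q s, h s⟫ = 0 ∧ ⟪q s, a s⟫ = 0 ∧ ⟪h s, a s⟫ = 0) ∧
  (∀ s, HasDerivAt q (h s) s) ∧
  (∀ s, HasDerivAt h (-q s + κ s • a s) s) ∧
  (∀ s, HasDerivAt a (-(κ s • h s)) s)

/-- The Darboux vector of the frame. -/
def darboux (q a : ℝ → E3) (κ : ℝ → ℝ) : ℝ → E3 := fun s => κ s • q s + a s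

set_option maxHeartbeats 1000000 in
theorem darboux_slant_implies_const_curvature
    (q h a : ℝ → E3) (κ : ℝ → ℝ)
    (hframe : IsFrenetFrame q h a κ)
    (hκC1 : ContDiff ℝ 1 κ)
    (hκne : ∀ s, κ s ≠ 0)
    (u : E3) (hu : u ≠ 0) (C : ℝ)
    (hW : ∀ s, ⟪darboux q a κ s, u⟫ = C) :
    ∃ κ₀ : ℝ, ∀ s, κ s = κ₀ := by
  obtain ⟨hortho, hq, hh, ha⟩ := hframe
  set f : ℝ → ℝ := fun s => ⟪q s, u⟫ with hf_def
  set g : ℝ → ℝ := fun s => ⟪h s, u⟫ with hg_def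
  set b : ℝ → ℝ := fun s => ⟪a s, u⟫ with hb_def
  have hκdiff : Differentiable ℝ κ := hκC1.differentiable one_ne_zero
  have hκ' : ∀ s, HasDerivAt κ (deriv κ s) s := fun s => (hκdiff s).hasDerivAt
  -- derivatives of f, g, b
  have hf' : ∀ s, HasDerivAt f (g s) s := by
    intro s
    have := (hq s).inner ℝ (hasDerivAt_const s u)
    simpa only [inner_zero_right, zero_add, add_zero] using this
  have hg' : ∀ s, HasDerivAt g (-f s + κ s * b s) s := by
    intro s
    have := (hh s).inner ℝ (hasDerivAt_const s u)
    simpa only [inner_zero_right, zero_add, add_zero, inner_add_left,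
      inner_neg_left, real_inner_smul_left] using this
  have hb' : ∀ s, HasDerivAt b (-(κ s * g s)) s := by
    intro s
    have := (ha s).inner ℝ (hasDerivAt_const s u)
    simpa only [inner_zero_right, zero_add, add_zero, inner_neg_left,
      real_inner_smul_left] using this
  -- derivative of s ↦ ⟪W s, u⟫ is κ' s * f s, and it is 0
  have key : ∀ s, deriv κ s * f s = 0 := by
    intro s
    have hWfun : (fun s => κ s * f s + b s) = fun _ => C := by
      funext t
      have := hW t
      simpa only [darboux, inner_add_left, real_inner_smul_left] using this
    have h1 : HasDerivAt (fun s => κ s * f s + b s)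
        (deriv κ s * f s + κ s * g s + -(κ s * g s)) s :=
      ((hκ' s).mul (hf' s)).add (hb' s)
    have h2 : HasDerivAt (fun s => κ s * f s + b s) 0 s := by
      rw [hWfun]; exact hasDerivAt_const s C
    have := h1.unique h2
    linarith
  -- show deriv κ = 0 everywhere
  have hderiv0 : ∀ s, deriv κ s = 0 := by
    intro s₀
    by_contra hne
    have hcont : Continuous (deriv κ) := hκC1.continuous_deriv le_rfl
    set U : Set ℝ := {s | deriv κ s ≠ 0} with hU_def
    have hUopen : IsOpen U := isOpen_ne.preimage hcont
    have hs₀U : s₀ ∈ U := hne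
    have hfU : ∀ s ∈ U, f s = 0 := by
      intro s hs
      exact (mul_eq_zero.mp (key s)).resolve_left hs
    have hgU : ∀ s ∈ U, g s = 0 := by
      intro s hs
      have hev : f =ᶠ[nhds s] (fun _ => (0:ℝ)) :=
        Filter.eventuallyEq_of_mem (hUopen.mem_nhds hs) (fun x hx => hfU x hx)
      have h0 : HasDerivAt f 0 s := (hasDerivAt_const s (0:ℝ)).congr_of_eventuallyEq hev
      exact ((hf' s).unique h0)
    have hbs₀ : b s₀ = 0 := by
      have hev : g =ᶠ[nhds s₀] (fun _ => (0:ℝ)) :=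
        Filter.eventuallyEq_of_mem (hUopen.mem_nhds hs₀U) (fun x hx => hgU x hx)
      have h0 : HasDerivAt g 0 s₀ := (hasDerivAt_const s₀ (0:ℝ)).congr_of_eventuallyEq hev
      have h1 := (hg' s₀).unique h0
      have hf0 := hfU s₀ hs₀U
      have h2 : κ s₀ * b s₀ = 0 := by linarith
      exact (mul_eq_zero.mp h2).resolve_left (hκne s₀)
    -- u is orthogonal to the orthonormal basis q s₀, h s₀, a s₀, so u = 0
    set v : Fin 3 → E3 := ![q s₀, h s₀, a s₀] with hv_def
    obtain ⟨o1, o2, o3, o4, o5, o6⟩ := hortho s₀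
    have hon : Orthonormal ℝ v := by
      rw [orthonormal_iff_ite]
      intro i j
      fin_cases i <;> fin_cases j <;>
        simp only [hv_def, Matrix.cons_val_zero, Matrix.cons_val_one, Matrix.head_cons,
          Matrix.cons_val_two, Matrix.tail_cons, Fin.mk_zero, Fin.mk_one] <;>
        first
          | simpa using o1
          | simpa using o2
          | simpa using o3
          | simpa using o4
          | simpa using o5
          | simpa using o6
          | simpa [real_inner_comm (q s₀)] using o4
          | simpa [real_inner_comm (q s₀)] using o5
          | simpa [real_inner_comm (h s₀)] using o6
    have hcard : Fintype.card (Fin 3) = Module.finrank ℝ E3 := by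
      simp [finrank_euclideanSpace]
    let bas : Module.Basis (Fin 3) ℝ E3 :=
      basisOfLinearIndependentOfCardEqFinrank hon.linearIndependent hcard
    have hbas : ∀ i, bas i = v i := fun i =>
      congrFun (coe_basisOfLinearIndependentOfCardEqFinrank hon.linearIndependent hcard) i
    have hinner : ∀ i, ⟪v i, u⟫ = 0 := by
      intro i
      fin_cases i
      · exact hfU s₀ hs₀U
      · exact hgU s₀ hs₀U
      · exact hbs₀
    have hu0 : u = 0 := by
      have hφ : (innerSL ℝ u : E3 →L[ℝ] ℝ).toLinearMap = (0 : E3 →ₗ[ℝ] ℝ) := by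
        apply bas.ext
        intro i
        rw [hbas i]
        have := hinner i
        simp only [ContinuousLinearMap.coe_coe, innerSL_apply_apply, LinearMap.zero_apply]
        rw [real_inner_comm]
        exact this
      have h0 : ⟪u, u⟫ = 0 := by
        have := LinearMap.congr_fun hφ u
        simpa only [ContinuousLinearMap.coe_coe, innerSL_apply_apply, LinearMap.zero_apply] using this
      exact inner_self_eq_zero.mp h0
    exact hu hu0
  refine ⟨κ 0, fun s => ?_⟩
  exact is_const_of_deriv_eq_zero hκdiff hderiv0 s 0
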